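/- (Lemma 1) For any η ∈ (0,1], the improved-FTRL updates satisfy ∑_{t=1}^T c_t(x_t) ≤ min_{x∈𝒫} [ (L/(2η))‖x‖₂² + ∑_{t=1}^T ( c_t(z_{t−1}) + ⟨∇c_t(z_{t−1}), x − z_{t−1}⟩ ) ] + (η/(2L)) ∑_{t=0}^{T−1} ‖∇c_{t+1}(z_t) − ∇c_t(z_t)‖₂². -/

import Mathlib

open Finset
open scoped RealInnerProductSpace

abbrev Euc (d : ℕ) := EuclideanSpace ℝ (Fin d)

lemma quad_min_strong {E : Type*} [NormedAddCommGroup E] [InnerProductSpace ℝ E]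
    {P : Set E} (hP : Convex ℝ P) (a w : E) {K : ℝ} (hK : 0 < K)
    {p : E} (hp : p ∈ P)
    (hmin : IsMinOn (fun v => ⟪a, v⟫ + K * ‖v - w‖ ^ 2) P p)
    {y : E} (hy : y ∈ P) :
    ⟪a, p⟫ + K * ‖p - w‖ ^ 2 + K * ‖y - p‖ ^ 2 ≤ ⟪a, y⟫ + K * ‖y - w‖ ^ 2 := by
  rw [isMinOn_iff] at hmin
  set D : ℝ := ⟪a, y - p⟫ + 2 * K * ⟪p - w, y - p⟫ with hD
  set B : ℝ := ‖y - p‖ ^ 2 with hB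
  have hB0 : (0:ℝ) ≤ B := sq_nonneg _
  have key : ∀ l : ℝ, 0 < l → l ≤ 1 → 0 ≤ l * D + K * l ^ 2 * B := by
    intro l hl0 hl1
    have hmem : p + l • (y - p) ∈ P := by
      have h := hP hp hy (by linarith : (0:ℝ) ≤ 1 - l) hl0.le (by ring)
      convert h using 1
      module
    have h := hmin _ hmem
    have hexp : ⟪a, p + l • (y - p)⟫ + K * ‖p + l • (y - p) - w‖ ^ 2
        = (⟪a, p⟫ + K * ‖p - w‖ ^ 2) + (l * D + K * l ^ 2 * B) := by
      have h1 : p + l • (y - p) - w = (p - w) + l • (y - p) := by abel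
      rw [inner_add_right, real_inner_smul_right, h1, norm_add_sq_real,
        real_inner_smul_right, norm_smul, hD, hB]
      rw [Real.norm_eq_abs, abs_of_pos hl0]
      ring
    rw [hexp] at h
    linarith
  have hD0 : (0:ℝ) ≤ D := by
    rcases eq_or_lt_of_le hB0 with hB' | hB'
    · have h := key 1 one_pos le_rfl
      nlinarith
    · by_contra hneg
      push_neg at hneg
      have hl0 : 0 < min 1 (-D / (2 * K * B)) := by
        exact lt_min one_pos (div_pos (by linarith) (by positivity))
      have h := key _ hl0 (min_le_left _ _)
      have h2 : min 1 (-D / (2 * K * B)) ≤ -D / (2 * K * B) := min_le_right _ _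
      have h3 : min 1 (-D / (2 * K * B)) * (2 * K * B) ≤ -D := by
        rw [← le_div_iff₀ (by positivity)]
        exact h2
      nlinarith [mul_pos hl0 hl0]
  have hy2 : ‖y - w‖ ^ 2 = ‖p - w‖ ^ 2 + 2 * ⟪p - w, y - p⟫ + B := by
    have h : y - w = (p - w) + (y - p) := by abel
    rw [h, norm_add_sq_real, hB]
  have hay : ⟪a, y - p⟫ = ⟪a, y⟫ - ⟪a, p⟫ := inner_sub_right a y p
  nlinarith [hD0]

lemma descent_lemma {E : Type*} [NormedAddCommGroup E] [InnerProductSpace ℝ E]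
    [CompleteSpace E]
    {f : E → ℝ} (hf : Differentiable ℝ f) {L : ℝ} {P : Set E} (hP : Convex ℝ P)
    (hlip : ∀ u ∈ P, ∀ v ∈ P, ‖gradient f u - gradient f v‖ ≤ L * ‖u - v‖)
    {p q : E} (hp : p ∈ P) (hq : q ∈ P) :
    f q ≤ f p + ⟪gradient f p, q - p⟫ + L / 2 * ‖q - p‖ ^ 2 := by
  set v := q - p with hv
  set A : ℝ := ⟪gradient f p, v⟫ with hA
  set B : ℝ := ‖v‖ ^ 2 with hB
  have hcurve : ∀ s : ℝ, HasDerivAt (fun s : ℝ => p + s • v) v s := by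
    intro s
    have h := ((hasDerivAt_id s).smul_const v).const_add p
    simpa using h
  have hphi : ∀ s : ℝ, HasDerivAt (fun s : ℝ => f (p + s • v))
      ⟪gradient f (p + s • v), v⟫ s := by
    intro s
    have hg := (hf (p + s • v)).hasGradientAt.hasFDerivAt
    have h := hg.comp_hasDerivAt s (hcurve s)
    rw [InnerProductSpace.toDual_apply_apply] at h; exact h
  have hg' : ∀ s : ℝ, HasDerivAt (fun s : ℝ => f (p + s • v) - s * A - L / 2 * s ^ 2 * B)
      (⟪gradient f (p + s • v), v⟫ - A - L / 2 * (2 * s ^ 1) * B) s := by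
    intro s
    have ha : HasDerivAt (fun s : ℝ => s * A) A s := by
      simpa using (hasDerivAt_id s).mul_const A
    have hb : HasDerivAt (fun s : ℝ => L / 2 * s ^ 2 * B) (L / 2 * (2 * s ^ 1) * B) s :=
      ((hasDerivAt_pow 2 s).const_mul (L / 2)).mul_const B
    exact ((hphi s).sub ha).sub hb
  have hanti : AntitoneOn (fun s : ℝ => f (p + s • v) - s * A - L / 2 * s ^ 2 * B)
      (Set.Icc 0 1) := by
    apply antitoneOn_of_deriv_nonpos (convex_Icc 0 1)
    · exact fun s _ => ((hg' s).continuousAt).continuousWithinAt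
    · intro s _
      exact (hg' s).differentiableAt.differentiableWithinAt
    · intro s hs
      rw [interior_Icc] at hs
      rw [(hg' s).deriv]
      have hmem : p + s • v ∈ P := by
        have h := hP hp hq (by linarith [hs.2] : (0:ℝ) ≤ 1 - s) hs.1.le (by ring)
        convert h using 1
        module
      have hCS : ⟪gradient f (p + s • v) - gradient f p, v⟫
          ≤ ‖gradient f (p + s • v) - gradient f p‖ * ‖v‖ := real_inner_le_norm _ _
      have hlb : ‖gradient f (p + s • v) - gradient f p‖ ≤ L * (s * ‖v‖) := by
        have h := hlip _ hmem _ hp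
        have he : p + s • v - p = s • v := by abel
        rwa [he, norm_smul, Real.norm_eq_abs, abs_of_pos hs.1] at h
      have hsub : ⟪gradient f (p + s • v) - gradient f p, v⟫
          = ⟪gradient f (p + s • v), v⟫ - A := by rw [inner_sub_left, hA]
      have hnn : (0:ℝ) ≤ ‖v‖ := norm_nonneg _
      have h2 : ‖gradient f (p + s • v) - gradient f p‖ * ‖v‖ ≤ L * (s * ‖v‖) * ‖v‖ :=
        mul_le_mul_of_nonneg_right hlb hnn
      have h3 : L * (s * ‖v‖) * ‖v‖ = L / 2 * (2 * s ^ 1) * B := by rw [hB]; ring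
      linarith [hCS, h2, hsub.ge, hsub.le]
  have hfin := hanti (Set.mem_Icc.mpr ⟨le_rfl, zero_le_one⟩)
    (Set.mem_Icc.mpr ⟨zero_le_one, le_rfl⟩) zero_le_one
  have h0 : p + (0:ℝ) • v = p := by simp
  have h1 : p + (1:ℝ) • v = q := by rw [one_smul, hv]; abel
  dsimp only at hfin
  rw [h0, h1] at hfin
  nlinarith [hfin]

set_option maxHeartbeats 1000000 in
/-- Lemma 1: for any `η ∈ (0,1]`, the improved FTRL updates satisfy
`∑ c_t(x_t) ≤ min_{x∈P} [L/(2η)‖x‖² + ∑ (c_t(z_{t-1}) + ⟨∇c_t(z_{t-1}), x - z_{t-1}⟩)]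
  + (η/(2L)) ∑ ‖∇c_{t+1}(z_t) - ∇c_t(z_t)‖²`,
where the minimum is witnessed by a minimizer `u ∈ P`. -/
theorem improved_ftrl_lemma_one {d T : ℕ} (hT : 1 ≤ T)
    (P : Set (Euc d)) (hPconv : Convex ℝ P) (hPcl : IsClosed P)
    (hPball : P ⊆ Metric.closedBall 0 1) (h0P : (0 : Euc d) ∈ P)
    (c : ℕ → Euc d → ℝ) (hc0 : c 0 = fun _ => (0 : ℝ))
    (L : ℝ) (hL : 0 < L)
    (hconv : ∀ t, 1 ≤ t → t ≤ T → ConvexOn ℝ Set.univ (c t))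
    (hdiff : ∀ t, 1 ≤ t → t ≤ T → Differentiable ℝ (c t))
    (hlip : ∀ t, 1 ≤ t → t ≤ T → ∀ u ∈ P, ∀ v ∈ P,
      ‖gradient (c t) u - gradient (c t) v‖ ≤ L * ‖u - v‖)
    (η : ℝ) (hη0 : 0 < η) (hη1 : η ≤ 1)
    (x z : ℕ → Euc d) (hz0 : z 0 = 0)
    (hx : ∀ t, 1 ≤ t → t ≤ T → x t ∈ P ∧
      IsMinOn (fun u => ⟪gradient (c (t - 1)) (z (t - 1)), u⟫
        + L / (2 * η) * ‖u - z (t - 1)‖ ^ 2) P (x t))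
    (hz : ∀ t, 1 ≤ t → t ≤ T → z t ∈ P ∧
      IsMinOn (fun u => (∑ τ ∈ Finset.Icc 1 t, ⟪gradient (c τ) (z (τ - 1)), u⟫)
        + L / (2 * η) * ‖u‖ ^ 2) P (z t))
    (u : Euc d) (huP : u ∈ P)
    (humin : IsMinOn (fun v => L / (2 * η) * ‖v‖ ^ 2
      + ∑ t ∈ Finset.Icc 1 T, (c t (z (t - 1))
        + ⟪gradient (c t) (z (t - 1)), v - z (t - 1)⟫)) P u) :
    ∑ t ∈ Finset.Icc 1 T, c t (x t)
      ≤ (L / (2 * η) * ‖u‖ ^ 2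
          + ∑ t ∈ Finset.Icc 1 T, (c t (z (t - 1))
            + ⟪gradient (c t) (z (t - 1)), u - z (t - 1)⟫))
        + η / (2 * L) *
          ∑ t ∈ Finset.range T, ‖gradient (c (t + 1)) (z t) - gradient (c t) (z t)‖ ^ 2 := by
  have hK : 0 < L / (2 * η) := by positivity
  set K := L / (2 * η) with hKdef
  have hzmem : ∀ t, t ≤ T → z t ∈ P := by
    intro t ht
    rcases Nat.eq_zero_or_pos t with h | h
    · rw [h, hz0]; exact h0P
    · exact (hz t h ht).1
  -- z t minimizes Φ_t in (a, w)-form, including t = 0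
  have hzmin : ∀ t, t ≤ T →
      IsMinOn (fun v : Euc d => ⟪∑ τ ∈ Finset.Icc 1 t, gradient (c τ) (z (τ - 1)), v⟫
        + K * ‖v - 0‖ ^ 2) P (z t) := by
    intro t ht
    rcases Nat.eq_zero_or_pos t with h | h
    · subst h
      rw [isMinOn_iff]
      intro y hy
      have hIcc : Finset.Icc 1 0 = (∅ : Finset ℕ) := by simp
      rw [hIcc]
      simp only [Finset.sum_empty, inner_zero_left, hz0, sub_zero, zero_add, norm_zero]
      linarith [mul_nonneg hK.le (sq_nonneg ‖y‖)]
    · have h2 := (hz t h ht).2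
      have he : (fun v : Euc d => ⟪∑ τ ∈ Finset.Icc 1 t, gradient (c τ) (z (τ - 1)), v⟫
          + K * ‖v - 0‖ ^ 2)
          = (fun v : Euc d => (∑ τ ∈ Finset.Icc 1 t, ⟪gradient (c τ) (z (τ - 1)), v⟫)
            + K * ‖v‖ ^ 2) := by
        funext v; rw [sum_inner, sub_zero]
      rw [he]; exact h2
  -- Step A : FTRL telescoping with strong convexity
  have stepA : ∀ t, t ≤ T →
      ∑ τ ∈ Finset.Icc 1 t, (⟪gradient (c τ) (z (τ - 1)), z τ⟫ + K * ‖z τ - z (τ - 1)‖ ^ 2)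
        ≤ (∑ τ ∈ Finset.Icc 1 t, ⟪gradient (c τ) (z (τ - 1)), z t⟫) + K * ‖z t‖ ^ 2 := by
    intro t
    induction t with
    | zero => intro _; simp [hz0]
    | succ n ih =>
      intro hn1
      have hn : n ≤ T := Nat.le_of_succ_le hn1
      have h1 := quad_min_strong hPconv (∑ τ ∈ Finset.Icc 1 n, gradient (c τ) (z (τ - 1))) 0
        hK (hzmem n hn) (hzmin n hn) (hzmem (n + 1) hn1)
      rw [sum_inner, sum_inner, sub_zero, sub_zero] at h1
      rw [Finset.sum_Icc_succ_top (Nat.le_add_left 1 n), Finset.sum_Icc_succ_top (Nat.le_add_left 1 n)]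
      simp only [Nat.add_sub_cancel]
      have ihn := ih hn
      linarith
  -- Φ_T(z_T) ≤ Φ_T(u)
  have hzTmin := (hz T hT le_rfl).2
  rw [isMinOn_iff] at hzTmin
  have hAT := hzTmin u huP
  have inA : ∑ τ ∈ Finset.Icc 1 T, (⟪gradient (c τ) (z (τ - 1)), z τ⟫ + K * ‖z τ - z (τ - 1)‖ ^ 2)
      ≤ (∑ τ ∈ Finset.Icc 1 T, ⟪gradient (c τ) (z (τ - 1)), u⟫) + K * ‖u‖ ^ 2 := by
    have hA := stepA T le_rfl
    linarith
  -- per-round bound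
  have perterm : ∀ t ∈ Finset.Icc 1 T,
      c t (x t) ≤ ((c t (z (t - 1)) + ⟪gradient (c t) (z (t - 1)), u - z (t - 1)⟫)
        + η / (2 * L) * ‖gradient (c t) (z (t - 1)) - gradient (c (t - 1)) (z (t - 1))‖ ^ 2)
        + ((⟪gradient (c t) (z (t - 1)), z t⟫ + K * ‖z t - z (t - 1)‖ ^ 2)
            - ⟪gradient (c t) (z (t - 1)), u⟫) := by
    intro t ht
    rw [Finset.mem_Icc] at ht
    obtain ⟨ht1, htT⟩ := ht
    have hzt1 : z (t - 1) ∈ P := hzmem (t - 1) (by omega)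
    have hxt := hx t ht1 htT
    -- smoothness (descent lemma)
    have hC := descent_lemma (hdiff t ht1 htT) hPconv (hlip t ht1 htT) hzt1 hxt.1
    -- prox step strong convexity at y = z t
    have hB := quad_min_strong hPconv (gradient (c (t - 1)) (z (t - 1))) (z (t - 1)) hK
      hxt.1 hxt.2 (hzmem t htT)
    set G := gradient (c t) (z (t - 1)) with hG
    set H := gradient (c (t - 1)) (z (t - 1)) with hH
    have hCS : ⟪G - H, x t - z t⟫ ≤ ‖G - H‖ * ‖x t - z t‖ := real_inner_le_norm _ _
    -- AM-GM with constants
    set s : ℝ := η / (2 * L) with hs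
    have hs0 : 0 < s := by positivity
    have hKs : 4 * s * K = 1 := by
      rw [hs, hKdef]; field_simp; ring
    have hamE : s * ‖G - H‖ ^ 2 + K * ‖x t - z t‖ ^ 2 - ‖G - H‖ * ‖x t - z t‖
        = K * (2 * s * ‖G - H‖ - ‖x t - z t‖) ^ 2 := by
      linear_combination (‖G - H‖ * ‖x t - z t‖ - s * ‖G - H‖ ^ 2) * hKs
    have ham : ‖G - H‖ * ‖x t - z t‖ ≤ s * ‖G - H‖ ^ 2 + K * ‖x t - z t‖ ^ 2 := by
      nlinarith [mul_nonneg hK.le (sq_nonneg (2 * s * ‖G - H‖ - ‖x t - z t‖))]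
    -- L/2 ≤ K
    have hK2 : K * (2 * η) = L := by rw [hKdef]; field_simp
    have hLK : L / 2 ≤ K := by nlinarith [hK2, hK, hη1, hη0]
    have hN : L / 2 * ‖x t - z (t - 1)‖ ^ 2 ≤ K * ‖x t - z (t - 1)‖ ^ 2 :=
      mul_le_mul_of_nonneg_right hLK (sq_nonneg _)
    -- inner product expansions
    have e1 : ⟪G, x t - z (t - 1)⟫ = ⟪G, x t⟫ - ⟪G, z (t - 1)⟫ := inner_sub_right _ _ _
    have e2 : ⟪G, u - z (t - 1)⟫ = ⟪G, u⟫ - ⟪G, z (t - 1)⟫ := inner_sub_right _ _ _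
    have e3 : ⟪G - H, x t - z t⟫ = ⟪G, x t⟫ - ⟪G, z t⟫ - ⟪H, x t⟫ + ⟪H, z t⟫ := by
      rw [inner_sub_left, inner_sub_right, inner_sub_right]; ring
    have e4 : ‖z t - x t‖ = ‖x t - z t‖ := norm_sub_rev _ _
    rw [e4] at hB
    linarith [hC, hB, hCS, ham, hN, e1, e2, e3]
  -- sum the per-round bounds
  have hsum := Finset.sum_le_sum perterm
  rw [Finset.sum_add_distrib, Finset.sum_add_distrib, ← Finset.mul_sum,
    Finset.sum_sub_distrib] at hsum
  -- reindex the error sum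
  have hreidx : ∑ t ∈ Finset.Icc 1 T,
      ‖gradient (c t) (z (t - 1)) - gradient (c (t - 1)) (z (t - 1))‖ ^ 2
      = ∑ t ∈ Finset.range T, ‖gradient (c (t + 1)) (z t) - gradient (c t) (z t)‖ ^ 2 := by
    refine Finset.sum_nbij' (fun t => t - 1) (fun t => t + 1) ?_ ?_ ?_ ?_ ?_
    · intro a ha; simp only [Finset.mem_Icc] at ha; simp only [Finset.mem_range]; omega
    · intro a ha; simp only [Finset.mem_range] at ha; simp only [Finset.mem_Icc]; omega
    · intro a ha; simp only [Finset.mem_Icc] at ha; omega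
    · intro a _; omega
    · intro a ha; simp only [Finset.mem_Icc] at ha
      have hsucc : a - 1 + 1 = a := by omega
      rw [hsucc]
  rw [hreidx] at hsum
  have inA' : (∑ τ ∈ Finset.Icc 1 T, (⟪gradient (c τ) (z (τ - 1)), z τ⟫
        + K * ‖z τ - z (τ - 1)‖ ^ 2))
      - ∑ τ ∈ Finset.Icc 1 T, ⟪gradient (c τ) (z (τ - 1)), u⟫ ≤ K * ‖u‖ ^ 2 := by
    linarith [inA]
  linarith [hsum, inA']
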